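/- Under friend-oriented preferences, the SCC partition is core stable: there is no coalition S ⊆ N such that every agent in S strictly prefers S to its SCC coalition. -/

import Mathlib

open Classical

/-- Directed reachability in the friendship digraph: edge (a,b) iff b ∈ F a. -/
def Reach {α : Type*} (F : α → Finset α) : α → α → Prop :=
  Relation.ReflTransGen fun a b => b ∈ F a

/-- The strongly connected component of agent i. -/
noncomputable def SCC {α : Type*} [Fintype α] (F : α → Finset α) (i : α) : Finset α :=
  Finset.univ.filter fun j => Reach F i j ∧ Reach F j i

/-- Number of friends of i in coalition S. -/
noncomputable def nFriends {α : Type*} [Fintype α] (F : α → Finset α) (i : α)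
    (S : Finset α) : ℕ := (S ∩ F i).card

/-- Number of enemies of i in coalition S. -/
noncomputable def nEnemies {α : Type*} [Fintype α] (F : α → Finset α) (i : α)
    (S : Finset α) : ℕ := (S \ (F i ∪ {i})).card

/-- Friend-oriented strict preference: strictly more friends, or equally many friends
and strictly fewer enemies. -/
def StrictPref {α : Type*} [Fintype α] (F : α → Finset α) (i : α)
    (S T : Finset α) : Prop :=
  nFriends F i S > nFriends F i T ∨
    (nFriends F i S = nFriends F i T ∧ nEnemies F i S < nEnemies F i T)

/-- Under friend-oriented preferences the SCC partition is core stable: no nonempty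
coalition S is such that every member strictly prefers S to its SCC coalition. -/
theorem scc_partition_core_stable {α : Type*} [Fintype α] (F : α → Finset α) :
    ¬ ∃ S : Finset α, S.Nonempty ∧ ∀ i ∈ S, StrictPref F i S (SCC F i) := by
  rintro ⟨S, hSne, hblock⟩
  -- reachability within S
  set R : α → α → Prop := Relation.ReflTransGen (fun a b => b ∈ F a ∧ b ∈ S) with hR
  have hRmono : ∀ {a b}, R a b → Reach F a b := fun {a b} h =>
    Relation.ReflTransGen.mono (r := fun a b => b ∈ F a ∧ b ∈ S) (p := fun a b => b ∈ F a)
      (fun x y h => h.1) a b h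
  -- pick a with minimal within-S reachable set
  obtain ⟨a, haS, hamin⟩ :=
    S.exists_min_image (fun a => (S.filter (fun b => R a b)).card) hSne
  -- sink property: anything in S reachable from a (within S) reaches a back
  have hsink : ∀ b ∈ S, R a b → R b a := by
    intro b hb hab
    by_contra hba
    have hsub : S.filter (fun c => R b c) ⊆ S.filter (fun c => R a c) := by
      intro c hc
      simp only [Finset.mem_filter] at hc ⊢
      exact ⟨hc.1, hab.trans hc.2⟩
    have hane : a ∉ S.filter (fun c => R b c) := by
      simp only [Finset.mem_filter]
      exact fun h => hba h.2
    have hlt : (S.filter (fun c => R b c)).card < (S.filter (fun c => R a c)).card := by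
      apply Finset.card_lt_card
      refine ⟨hsub, fun h => hane (h ?_)⟩
      simp only [Finset.mem_filter]
      exact ⟨haS, Relation.ReflTransGen.refl⟩
    exact absurd (hamin b hb) (by omega)
  set C : Finset α := S.filter (fun b => R a b) with hC
  set D : Finset α := SCC F a with hD
  have hCS : C ⊆ S := Finset.filter_subset _ _
  have hCD : C ⊆ D := by
    intro b hb
    simp only [hC, Finset.mem_filter] at hb
    simp only [hD, SCC, Finset.mem_filter, Finset.mem_univ, true_and]
    exact ⟨hRmono hb.2, hRmono (hsink b hb.1 hb.2)⟩
  -- key facts for each i ∈ C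
  have hkey : ∀ i ∈ C, (D ∩ F i ⊆ C) ∧ nEnemies F i S < nEnemies F i D := by
    intro i hi
    simp only [hC, Finset.mem_filter] at hi
    obtain ⟨hiS, hai⟩ := hi
    have hia : R i a := hsink i hiS hai
    -- friends of i in S are in C
    have hSC : S ∩ F i ⊆ C := by
      intro j hj
      simp only [Finset.mem_inter] at hj
      simp only [hC, Finset.mem_filter]
      exact ⟨hj.1, hai.tail ⟨hj.2, hj.1⟩⟩
    have hSFD : S ∩ F i ⊆ D ∩ F i := by
      intro j hj
      exact Finset.mem_inter.2 ⟨hCD (hSC hj), (Finset.mem_inter.1 hj).2⟩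
    -- SCC F i = D
    have hSCCi : SCC F i = D := by
      have h1 : Reach F a i := hRmono hai
      have h2 : Reach F i a := hRmono hia
      ext j
      simp only [hD, SCC, Finset.mem_filter, Finset.mem_univ, true_and]
      exact ⟨fun h => ⟨h1.trans h.1, h.2.trans h2⟩, fun h => ⟨h2.trans h.1, h.2.trans h1⟩⟩
    have hle : nFriends F i S ≤ nFriends F i D := Finset.card_le_card hSFD
    have := hblock i hiS
    rw [hSCCi] at this
    rcases this with h | ⟨heq, henem⟩
    · exact absurd hle (by omega)
    · have hsets : S ∩ F i = D ∩ F i := by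
        apply Finset.eq_of_subset_of_card_le hSFD
        exact le_of_eq heq.symm
      refine ⟨?_, henem⟩
      rw [← hsets]
      exact hSC
  -- D ⊆ C
  have haC : a ∈ C := by
    simp only [hC, Finset.mem_filter]
    exact ⟨haS, Relation.ReflTransGen.refl⟩
  have hDC : D ⊆ C := by
    intro j hj
    simp only [hD, SCC, Finset.mem_filter, Finset.mem_univ, true_and] at hj
    obtain ⟨haj, hja⟩ := hj
    revert hja
    induction haj with
    | refl => exact fun _ => haC
    | @tail b c hab hbc ih =>
      intro hca
      have hbC : b ∈ C := ih ((Relation.ReflTransGen.single hbc).trans hca)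
      have hcD : c ∈ D := by
        simp only [hD, SCC, Finset.mem_filter, Finset.mem_univ, true_and]
        exact ⟨hab.tail hbc, hca⟩
      exact (hkey b hbC).1 (Finset.mem_inter.2 ⟨hcD, hbc⟩)
  -- contradiction via enemies of a
  have hDS : D ⊆ S := fun x hx => hCS (hDC hx)
  have hmono : nEnemies F a D ≤ nEnemies F a S := by
    apply Finset.card_le_card
    exact Finset.sdiff_subset_sdiff hDS (le_refl _)
  have := (hkey a haC).2
  omega
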